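/- arXiv:2201.07395 — 2 statements merged into one kernel-verified Lean document; each statement's English description precedes it below -/
import Mathlib

section
/- Let w, b, k be real numbers with w ≠ 0 and k ≠ 0. Then |∫_{-∞}^{∞} (cosh(w x + b))^{-2} e^{-i k x} dx| = π |k| / (w² · sinh(π |k| / (2|w|))). Consequently the magnitude of the Fourier transform at frequency k of the scaled-and-shifted activation sech²(wx+b) decays like exp(-π|k|/(2|w|)) as |k| → ∞, i.e., exponentially in frequency with rate governed by the input weight w. -/
open Real MeasureTheory

lemma tanh_eq' (y : ℝ) : Real.tanh y = (Real.exp (2*y) - 1)/(Real.exp (2*y) + 1) := by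
  rw [Real.tanh_eq_sinh_div_cosh, Real.sinh_eq, Real.cosh_eq]
  have h : Real.exp y > 0 := Real.exp_pos y
  have h2 : Real.exp (2*y) = Real.exp y * Real.exp y := by rw [two_mul, Real.exp_add]
  have h4 : Real.exp (-y) = (Real.exp y)⁻¹ := Real.exp_neg y
  rw [h2, h4]
  have h3 : Real.exp y * Real.exp y + 1 > 0 := by positivity
  field_simp

lemma tanh_mem (y : ℝ) : Real.tanh y ∈ Set.Ioo (-1:ℝ) 1 := by
  rw [tanh_eq']
  have h : Real.exp (2*y) > 0 := Real.exp_pos _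
  constructor
  · rw [lt_div_iff₀ (by linarith)]; linarith
  · rw [div_lt_iff₀ (by linarith)]; linarith

lemma hasDerivAt_tanh' (y : ℝ) : HasDerivAt Real.tanh (1 / Real.cosh y ^ 2) y := by
  have h := (Real.hasDerivAt_sinh y).div (Real.hasDerivAt_cosh y) (Real.cosh_pos y).ne'
  have e : (Real.sinh / Real.cosh) = Real.tanh :=
    funext fun x => (Real.tanh_eq_sinh_div_cosh x).symm
  rw [e] at h
  refine h.congr_deriv ?_
  have := Real.cosh_sq_sub_sinh_sq y
  have hc := (Real.cosh_pos y).ne'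
  rw [div_left_inj' (pow_ne_zero 2 hc)]
  nlinarith [Real.cosh_sq_sub_sinh_sq y]

-- surjectivity onto Ioo
lemma tanh_surj {t : ℝ} (ht : t ∈ Set.Ioo (-1:ℝ) 1) :
    Real.tanh ((1/2) * Real.log ((1+t)/(1-t))) = t := by
  obtain ⟨h1, h2⟩ := ht
  have hp : (0:ℝ) < (1+t)/(1-t) := by
    apply div_pos <;> linarith
  rw [tanh_eq']
  have : 2 * ((1/2) * Real.log ((1+t)/(1-t))) = Real.log ((1+t)/(1-t)) := by ring
  rw [this, Real.exp_log hp]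
  have h3 : (1:ℝ) - t ≠ 0 := by linarith
  rw [div_eq_iff (by positivity)]
  field_simp
  ring

lemma tanh_strictMono : StrictMono Real.tanh := by
  apply strictMono_of_deriv_pos
  intro x
  rw [(hasDerivAt_tanh' x).deriv]
  positivity

lemma tanh_image : Real.tanh '' Set.univ = Set.Ioo (-1:ℝ) 1 := by
  ext t
  simp only [Set.image_univ, Set.mem_range]
  constructor
  · rintro ⟨y, rfl⟩; exact tanh_mem y
  · intro ht; exact ⟨_, tanh_surj ht⟩


noncomputable def gg (κ : ℝ) (t : ℝ) : ℂ :=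
  Complex.exp (-(Complex.I * κ / 2) * Real.log ((1+t)/(1-t)))

lemma beta_eq_g (κ : ℝ) :
    Complex.betaIntegral (1 - Complex.I*κ/2) (1 + Complex.I*κ/2)
      = ∫ u in Set.Ioo (0:ℝ) 1, gg κ (2*u - 1) := by
  rw [Complex.betaIntegral, intervalIntegral.integral_of_le zero_le_one,
    MeasureTheory.integral_Ioc_eq_integral_Ioo]
  apply setIntegral_congr_fun measurableSet_Ioo
  intro u hu
  obtain ⟨h0, h1⟩ := hu
  dsimp only
  have hu0 : (u:ℂ) ≠ 0 := by exact_mod_cast h0.ne'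
  have h1u : (0:ℝ) < 1 - u := by linarith
  have hu1 : (1 - (u:ℂ)) ≠ 0 := by
    rw [sub_ne_zero]; exact_mod_cast h1.ne'
  rw [Complex.cpow_def_of_ne_zero hu0, Complex.cpow_def_of_ne_zero hu1,
    ← Complex.exp_add]
  have hl1 : Complex.log (u:ℂ) = (Real.log u : ℂ) := (Complex.ofReal_log h0.le).symm
  have hl2 : Complex.log (1 - (u:ℂ)) = (Real.log (1-u) : ℂ) := by
    rw [show (1 - (u:ℂ)) = (((1-u:ℝ)):ℂ) by push_cast; ring]
    exact (Complex.ofReal_log h1u.le).symm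
  rw [hl1, hl2, gg]
  congr 1
  have harg : (1+(2*u-1))/(1-(2*u-1)) = u/(1-u) := by
    rw [show (1+(2*u-1)) = 2*u by ring, show (1-(2*u-1)) = 2*(1-u) by ring,
      mul_div_mul_left _ _ (two_ne_zero)]
  rw [harg, Real.log_div h0.ne' h1u.ne']
  push_cast
  ring

lemma Ioo_eq_two_smul (κ : ℝ) :
    (∫ t in Set.Ioo (-1:ℝ) 1, gg κ t) = (2:ℂ) * ∫ u in Set.Ioo (0:ℝ) 1, gg κ (2*u - 1) := by
  have h := intervalIntegral.integral_comp_mul_add (a := (0:ℝ)) (b := 1) (gg κ)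
    (two_ne_zero) (-1)
  simp only [show (2:ℝ)*0 + -1 = -1 from by norm_num,
    show (2:ℝ)*1 + -1 = 1 from by norm_num] at h
  have e0 : (∫ u in Set.Ioo (0:ℝ) 1, gg κ (2*u - 1)) = ∫ u in (0:ℝ)..1, gg κ (2*u + -1) := by
    rw [intervalIntegral.integral_of_le zero_le_one,
      MeasureTheory.integral_Ioc_eq_integral_Ioo]
    apply setIntegral_congr_fun measurableSet_Ioo
    intro u _
    simp [sub_eq_add_neg]
  have e1 : (∫ t in Set.Ioo (-1:ℝ) 1, gg κ t) = ∫ t in (-1:ℝ)..1, gg κ t := by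
    rw [intervalIntegral.integral_of_le (by norm_num : (-1:ℝ) ≤ 1),
      MeasureTheory.integral_Ioc_eq_integral_Ioo]
  rw [e0, e1, h, Complex.real_smul]
  push_cast
  ring

lemma ratio_tanh (x : ℝ) : (1 + Real.tanh x)/(1 - Real.tanh x) = Real.exp (2*x) := by
  rw [tanh_eq']
  have hE : Real.exp (2*x) > 0 := Real.exp_pos _
  have h1 : Real.exp (2*x) + 1 ≠ 0 := by positivity
  have hnum : 1 + (Real.exp (2*x) - 1) / (Real.exp (2*x) + 1)
      = 2 * Real.exp (2*x) / (Real.exp (2*x) + 1) := by field_simp; ring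
  have hden : 1 - (Real.exp (2*x) - 1) / (Real.exp (2*x) + 1)
      = 2 / (Real.exp (2*x) + 1) := by field_simp; ring
  rw [hnum, hden]
  field_simp

lemma cov (κ : ℝ) :
    (∫ y : ℝ, ((1 / Real.cosh y ^ 2 : ℝ) : ℂ) * Complex.exp (-Complex.I * κ * y))
      = ∫ t in Set.Ioo (-1:ℝ) 1, gg κ t := by
  have h := integral_image_eq_integral_abs_deriv_smul (f := Real.tanh)
    (f' := fun x => 1 / Real.cosh x ^ 2) MeasurableSet.univ
    (fun x _ => (hasDerivAt_tanh' x).hasDerivWithinAt) (tanh_strictMono.injective.injOn) (gg κ)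
  rw [tanh_image] at h
  rw [h, MeasureTheory.setIntegral_univ]
  apply integral_congr_ae
  filter_upwards with x
  have hpos : (0:ℝ) < 1 / Real.cosh x ^ 2 := by positivity
  rw [abs_of_pos hpos, Complex.real_smul]
  congr 1
  rw [gg, ratio_tanh, Real.log_exp]
  congr 1
  push_cast
  ring

lemma beta_value (κ : ℝ) (hκ : κ ≠ 0) :
    Complex.betaIntegral (1 - Complex.I*κ/2) (1 + Complex.I*κ/2)
      = ((π * κ / (2 * Real.sinh (π*κ/2)) : ℝ) : ℂ) := by
  set z : ℂ := Complex.I*κ/2 with hz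
  have hzne : z ≠ 0 := by
    simp [hz, Complex.I_ne_zero, hκ, Complex.ofReal_eq_zero]
  have hre1 : 0 < (1 - z).re := by simp [hz]
  have hre2 : 0 < (1 + z).re := by simp [hz]
  have hB := Complex.Gamma_mul_Gamma_eq_betaIntegral hre1 hre2
  have hsum : (1 - z) + (1 + z) = 2 := by ring
  rw [hsum, show Complex.Gamma 2 = 1 from by simpa using Complex.Gamma_nat_eq_factorial 1, one_mul] at hB
  rw [← hB]
  have h1 : Complex.Gamma (1 + z) = z * Complex.Gamma z := by
    rw [add_comm, Complex.Gamma_add_one z hzne]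
  rw [h1]
  have hrefl := Complex.Gamma_mul_Gamma_one_sub z
  have : Complex.Gamma (1 - z) * (z * Complex.Gamma z)
      = z * (Complex.Gamma z * Complex.Gamma (1 - z)) := by ring
  rw [this, hrefl]
  have hsin : Complex.sin (π * z) = Real.sinh (π*κ/2) * Complex.I := by
    have : (π:ℂ) * z = ((π*κ/2 : ℝ) : ℂ) * Complex.I := by
      push_cast [hz]; ring
    rw [this, Complex.sin_mul_I, Complex.ofReal_sinh]
  rw [hsin]
  have hsh : Real.sinh (π*κ/2) ≠ 0 := by
    rw [Real.sinh_ne_zero]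
    positivity
  rw [hz]
  push_cast
  have hsC : Complex.sinh (↑π * ↑κ / 2) ≠ 0 := by
    have h' : (↑π * ↑κ / 2 : ℂ) = ((π*κ/2:ℝ):ℂ) := by push_cast; ring
    rw [h', ← Complex.ofReal_sinh]
    exact_mod_cast hsh
  field_simp

lemma core (κ : ℝ) (hκ : κ ≠ 0) :
    (∫ y : ℝ, ((1 / Real.cosh y ^ 2 : ℝ) : ℂ) * Complex.exp (-Complex.I * κ * y))
      = ((π * κ / Real.sinh (π*κ/2) : ℝ) : ℂ) := by
  rw [cov, Ioo_eq_two_smul, ← beta_eq_g, beta_value κ hκ]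
  have hsh : Real.sinh (π*κ/2) ≠ 0 := by
    rw [Real.sinh_ne_zero]; positivity
  push_cast
  have hshc : ((Real.sinh (π*κ/2) : ℝ) : ℂ) ≠ 0 := by exact_mod_cast hsh
  field_simp

/-- For `w ≠ 0`, `k ≠ 0`, the magnitude of the Fourier transform at frequency `k` of the
scaled-and-shifted activation derivative `sech²(wx+b)` equals
`π|k| / (w² sinh(π|k|/(2|w|)))`, which decays exponentially in `|k|` with rate governed by
the input weight `w`. -/
theorem fourier_integral_sech_sq_scaled (w b k : ℝ) (hw : w ≠ 0) (hk : k ≠ 0) :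
    ‖∫ x : ℝ, ((1 / (Real.cosh (w * x + b)) ^ 2 : ℝ) : ℂ) * Complex.exp (-Complex.I * k * x)‖
      = π * |k| / (w ^ 2 * Real.sinh (π * |k| / (2 * |w|))) := by
  set κ := k / w with hκdef
  have hκ : κ ≠ 0 := div_ne_zero hk hw
  set c : ℂ := Complex.exp (Complex.I * (k * b / w)) with hc
  set F : ℝ → ℂ := fun y => ((1 / Real.cosh y ^ 2 : ℝ) : ℂ) * Complex.exp (-Complex.I * κ * y)
    with hF
  have key : ∀ x : ℝ, ((1 / (Real.cosh (w * x + b)) ^ 2 : ℝ) : ℂ)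
      * Complex.exp (-Complex.I * k * x) = F (w * x + b) * c := by
    intro x
    have he : Complex.exp (-Complex.I * (k:ℂ) * (x:ℂ))
        = Complex.exp (-Complex.I * (κ:ℂ) * ((w * x + b : ℝ) : ℂ)) * c := by
      rw [hc, ← Complex.exp_add]
      congr 1
      have hwC : (w:ℂ) ≠ 0 := by exact_mod_cast hw
      push_cast [hκdef]
      field_simp
      ring
    rw [hF]
    dsimp only
    rw [he]
    ring
  simp_rw [key]
  rw [MeasureTheory.integral_mul_const]
  have sub1 : (∫ x : ℝ, F (w * x + b)) = |w⁻¹| • ∫ y : ℝ, F y := by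
    have h : (∫ x : ℝ, F (w * x + b)) = |w⁻¹| • ∫ y : ℝ, F (y + b) :=
      MeasureTheory.Measure.integral_comp_mul_left (fun y => F (y + b)) w
    rw [h, MeasureTheory.integral_add_right_eq_self]
  rw [sub1, core κ hκ]
  rw [norm_mul, norm_smul]
  have hcnorm : ‖c‖ = 1 := by
    rw [hc, Complex.norm_exp]
    simp
  rw [hcnorm, mul_one, Complex.norm_real, Real.norm_eq_abs, Real.norm_eq_abs]
  rw [abs_div, abs_mul, abs_of_pos Real.pi_pos, Real.abs_sinh, abs_abs]
  have habs : |π * κ / 2| = π * |k| / (2*|w|) := by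
    rw [abs_div, abs_mul, abs_of_pos Real.pi_pos, hκdef, abs_div]
    rw [show |(2:ℝ)| = 2 from by norm_num]
    ring
  rw [habs, hκdef, abs_div]
  have hw2 : |w| ≠ 0 := abs_ne_zero.mpr hw
  have hsh : Real.sinh (π * |k| / (2*|w|)) ≠ 0 := by
    rw [Real.sinh_ne_zero]
    have : |k| ≠ 0 := abs_ne_zero.mpr hk
    positivity
  rw [abs_inv]
  field_simp
  rw [sq_abs]
end

section
/- Let N ≥ 2, h = 1/N, and let A_N be the (N-1)×(N-1) symmetric matrix with 2/h² on the diagonal and -1/h² on the first off-diagonals, with eigenpairs A_N w_k = λ_k w_k, λ_k = (4/h²) sin²(kπ/(2N)), (w_k)_i = sin(ikπ/N). Suppose v : ℝ → ℝ^{N-1} solves the gradient flow dv/dt = -(1/N) A_N (A_N v(t) - g) of the least-squares residual loss, and let u* satisfy A_N u* = g. Then the error e(t) = v(t) - u* satisfies de/dt = -(1/N) A_N² e(t), and for each k, ⟨e(t), w_k⟩ = exp(-λ_k² t / N) ⟨e(0), w_k⟩. Since λ_k is strictly increasing in k, lower-frequency error components converge strictly slower under this gradient flow on the discretized differential operator.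 -/
open Real Matrix

private lemma ode_exp_aux {f : ℝ → ℝ} {c : ℝ} (hf : ∀ s, HasDerivAt f (c * f s) s)
    (t : ℝ) : f t = Real.exp (c * t) * f 0 := by
  have key : ∀ s : ℝ, HasDerivAt (fun u => Real.exp (-c * u) * f u) 0 s := by
    intro s
    have h1 : HasDerivAt (fun u : ℝ => Real.exp (-c * u)) (-c * Real.exp (-c * s)) s := by
      have h0 : HasDerivAt (fun u : ℝ => -c * u) (-c) s := by
        simpa using (hasDerivAt_id s).const_mul (-c)
      simpa [Function.comp_def, mul_comm, neg_mul] using (Real.hasDerivAt_exp (-c * s)).comp s h0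
    have h2 := h1.fun_mul (hf s)
    exact h2.congr_deriv (by ring)
  have hconst := is_const_of_deriv_eq_zero (fun x => (key x).differentiableAt)
    (fun x => (key x).deriv) t 0
  simp only [neg_mul, mul_zero, neg_zero, Real.exp_zero, one_mul] at hconst
  have h3 : f t = Real.exp (c * t) * (Real.exp (-(c * t)) * f t) := by
    rw [← mul_assoc, ← Real.exp_add]
    simp
  rw [h3, hconst]

/-- Gradient flow of the least-squares loss of the discretized differential operator:
for `dv/dt = -(1/N) A_N (A_N v - g)` and `A_N u* = g`, the error `e = v - u*` satisfies
`de/dt = -(1/N) A_N² e`, and its component along the frequency-`k` eigenvector `w_k`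
decays as `exp(-λ_k² t / N)`; the eigenvalues `λ_k = (4/h²) sin²(kπ/(2N))` are strictly
increasing in `k`, so lower-frequency error components converge strictly slower. -/
theorem discrete_operator_gradient_flow (N : ℕ) (hN : 2 ≤ N) (h : ℝ) (hh : h = 1 / N)
    (A : Matrix (Fin (N - 1)) (Fin (N - 1)) ℝ)
    (hA : ∀ i j : Fin (N - 1),
      A i j = if i = j then 2 / h ^ 2
        else if i.val + 1 = j.val ∨ j.val + 1 = i.val then -1 / h ^ 2 else 0)
    (g : Fin (N - 1) → ℝ) (v : ℝ → Fin (N - 1) → ℝ)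
    (hode : ∀ t : ℝ, HasDerivAt v (-((1 / (N : ℝ)) • A.mulVec (A.mulVec (v t) - g))) t)
    (ustar : Fin (N - 1) → ℝ) (hustar : A.mulVec ustar = g) :
    (∀ t : ℝ, HasDerivAt (fun s => v s - ustar)
        (-((1 / (N : ℝ)) • (A * A).mulVec (v t - ustar))) t) ∧
    (∀ k : ℕ, 1 ≤ k → k ≤ N - 1 → ∀ t : ℝ,
      dotProduct (v t - ustar)
          (fun i : Fin (N - 1) => Real.sin ((i.val + 1) * k * π / N))
        = Real.exp (-(4 / h ^ 2 * Real.sin (k * π / (2 * N)) ^ 2) ^ 2 * t / N) *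
            dotProduct (v 0 - ustar)
              (fun i : Fin (N - 1) => Real.sin ((i.val + 1) * k * π / N))) ∧
    (∀ k k' : ℕ, 1 ≤ k → k < k' → k' ≤ N - 1 →
      4 / h ^ 2 * Real.sin (k * π / (2 * N)) ^ 2
        < 4 / h ^ 2 * Real.sin (k' * π / (2 * N)) ^ 2) := by
  have hN0 : (N : ℝ) ≠ 0 := Nat.cast_ne_zero.mpr (by omega)
  have hNpos : (0 : ℝ) < N := by
    have : 0 < N := by omega
    exact_mod_cast this
  -- Part 1: the error ODE
  have part1 : ∀ t : ℝ, HasDerivAt (fun s => v s - ustar)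
      (-((1 / (N : ℝ)) • (A * A).mulVec (v t - ustar))) t := by
    intro t
    have h1 := (hode t).sub_const ustar
    have h2 : A.mulVec (A.mulVec (v t) - g) = (A * A).mulVec (v t - ustar) := by
      rw [← hustar, ← Matrix.mulVec_sub, Matrix.mulVec_mulVec]
    rw [← h2]
    exact h1
  -- Symmetry of A
  have hAT : Aᵀ = A := by
    ext i j
    rw [Matrix.transpose_apply, hA, hA]
    by_cases hij : i = j
    · simp [hij]
    · have hji : ¬ j = i := fun e => hij e.symm
      rw [if_neg hji, if_neg hij]
      have e : (j.val + 1 = i.val ∨ i.val + 1 = j.val) = (i.val + 1 = j.val ∨ j.val + 1 = i.val) :=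
        propext or_comm
      exact if_congr (iff_of_eq e) rfl rfl
  -- Eigenvector identity
  have heig : ∀ k : ℕ,
      A.mulVec (fun i : Fin (N - 1) => Real.sin ((i.val + 1) * k * π / N))
        = (4 / h ^ 2 * Real.sin (k * π / (2 * N)) ^ 2) •
            (fun i : Fin (N - 1) => Real.sin ((i.val + 1) * k * π / N)) := by
    intro k
    set S : ℕ → ℝ := fun m => Real.sin (m * k * π / N) with hS
    have hS0 : S 0 = 0 := by simp [hS]
    have hSN : S N = 0 := by
      have e : (N : ℝ) * k * π / N = k * π := by field_simp
      simp only [hS, e]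
      exact Real.sin_nat_mul_pi k
    have hw : ∀ m : ℕ, Real.sin (((m : ℝ) + 1) * k * π / N) = S (m + 1) := by
      intro m
      simp only [hS]
      push_cast
      ring_nf
    funext i
    have hi : i.val < N - 1 := i.isLt
    simp only [Matrix.mulVec, dotProduct, Pi.smul_apply, smul_eq_mul]
    have hterm : ∀ j : Fin (N - 1),
        A i j * Real.sin (((j.val : ℝ) + 1) * k * π / N) =
          (if j = i then 2 / h ^ 2 * S (i.val + 1) else 0)
          + ((if j.val + 1 = i.val then (-1 / h ^ 2) * S (j.val + 1) else 0)
            + (if i.val + 1 = j.val then (-1 / h ^ 2) * S (j.val + 1) else 0)) := by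
      intro j
      rw [hA i j, hw]
      by_cases h1 : i = j
      · have e1 : ¬ (j.val + 1 = i.val) := by omega
        have e2 : ¬ (i.val + 1 = j.val) := by omega
        simp [h1, e1, e2]
      · have h1' : ¬ (j = i) := fun e => h1 e.symm
        rw [if_neg h1', if_neg h1]
        by_cases h2 : i.val + 1 = j.val
        · have h3 : ¬ (j.val + 1 = i.val) := by omega
          rw [if_pos (Or.inl h2), if_neg h3, if_pos h2]
          ring
        · by_cases h4 : j.val + 1 = i.val
          · rw [if_pos (Or.inr h4), if_pos h4, if_neg h2]
            ring
          · rw [if_neg (by tauto), if_neg h4, if_neg h2]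
            ring
    rw [Finset.sum_congr rfl (fun j _ => hterm j), Finset.sum_add_distrib,
      Finset.sum_add_distrib]
    have s1 : (∑ j : Fin (N - 1), if j = i then 2 / h ^ 2 * S (i.val + 1) else 0)
        = 2 / h ^ 2 * S (i.val + 1) := by
      rw [Finset.sum_ite_eq' Finset.univ i (fun _ => 2 / h ^ 2 * S (i.val + 1))]
      simp
    have s2 : (∑ j : Fin (N - 1), if j.val + 1 = i.val then (-1 / h ^ 2) * S (j.val + 1) else 0)
        = (-1 / h ^ 2) * S i.val := by
      rcases Nat.eq_zero_or_pos i.val with h0 | h0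
      · have hno : ∀ j : Fin (N - 1), ¬ (j.val + 1 = i.val) := fun j => by omega
        rw [Finset.sum_eq_zero (fun j _ => if_neg (hno j)), h0, hS0, mul_zero]
      · have hlt : i.val - 1 < N - 1 := by omega
        rw [Finset.sum_eq_single (⟨i.val - 1, hlt⟩ : Fin (N - 1))]
        · rw [if_pos (by simp; omega)]
          congr 2
          simp
          omega
        · intro j _ hj
          apply if_neg
          intro hc
          apply hj
          apply Fin.ext
          simp
          omega
        · intro hc
          exact absurd (Finset.mem_univ _) hc
    have s3 : (∑ j : Fin (N - 1), if i.val + 1 = j.val then (-1 / h ^ 2) * S (j.val + 1) else 0)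
        = (-1 / h ^ 2) * S (i.val + 2) := by
      by_cases hb : i.val + 1 < N - 1
      · rw [Finset.sum_eq_single (⟨i.val + 1, hb⟩ : Fin (N - 1))]
        · rw [if_pos (by simp)]
        · intro j _ hj
          apply if_neg
          intro hc
          apply hj
          apply Fin.ext
          simp
          omega
        · intro hc
          exact absurd (Finset.mem_univ _) hc
      · have hno : ∀ j : Fin (N - 1), ¬ (i.val + 1 = j.val) := fun j => by
          have := j.isLt
          omega
        have hiN : i.val + 2 = N := by omega
        rw [Finset.sum_eq_zero (fun j _ => if_neg (hno j)), hiN, hSN, mul_zero]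
    rw [s1, s2, s3, hw]
    have key : S i.val + S (i.val + 2) = 2 * S (i.val + 1) * Real.cos (k * π / N) := by
      simp only [hS]
      push_cast
      have e1 : ((i.val : ℝ)) * k * π / N = ((i.val : ℝ) + 1) * k * π / N - k * π / N := by
        ring
      have e2 : ((i.val : ℝ) + 2) * k * π / N = ((i.val : ℝ) + 1) * k * π / N + k * π / N := by
        ring
      rw [e1, e2, Real.sin_add, Real.sin_sub]
      ring
    have hcos : 2 * Real.sin (k * π / (2 * N)) ^ 2 = 1 - Real.cos (k * π / N) := by
      rw [Real.sin_sq_eq_half_sub]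
      have e : 2 * ((k : ℝ) * π / (2 * N)) = k * π / N := by field_simp
      rw [e]
      ring
    linear_combination (-1 / h ^ 2) * key + (-2 / h ^ 2 * S (i.val + 1)) * hcos
  refine ⟨part1, ?_, ?_⟩
  · -- Part 2: mode decay
    intro k hk1 hk2 t
    set w : Fin (N - 1) → ℝ := fun i : Fin (N - 1) => Real.sin ((i.val + 1) * k * π / N)
      with hwdef
    set lam : ℝ := 4 / h ^ 2 * Real.sin (k * π / (2 * N)) ^ 2 with hlamdef
    have heigk : A.mulVec w = lam • w := heig k
    have hMw : (A * A).mulVec w = (lam ^ 2) • w := by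
      rw [← Matrix.mulVec_mulVec, heigk, Matrix.mulVec_smul, heigk, smul_smul, sq]
    set f : ℝ → ℝ := fun s => dotProduct (v s - ustar) w with hfdef
    have hf' : ∀ s, HasDerivAt f (-(lam ^ 2) / N * f s) s := by
      intro s
      have hcoord := hasDerivAt_pi.mp (part1 s)
      have hsum : HasDerivAt (fun u => ∑ i, (v u - ustar) i * w i)
          (∑ i, (-((1 / (N : ℝ)) • (A * A).mulVec (v s - ustar))) i * w i) s :=
        HasDerivAt.fun_sum (fun i _ => (hcoord i).mul_const (w i))
      have hfeq : f = fun u => ∑ i, (v u - ustar) i * w i := rfl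
      rw [hfeq]
      convert hsum using 1
      have hdot : (∑ i, (-((1 / (N : ℝ)) • (A * A).mulVec (v s - ustar))) i * w i)
          = dotProduct (-((1 / (N : ℝ)) • (A * A).mulVec (v s - ustar))) w := rfl
      rw [hdot, neg_dotProduct, smul_dotProduct, smul_eq_mul]
      have hsym : dotProduct ((A * A).mulVec (v s - ustar)) w
          = dotProduct (v s - ustar) ((A * A).mulVec w) := by
        rw [dotProduct_comm, Matrix.dotProduct_mulVec, ← Matrix.mulVec_transpose,
          Matrix.transpose_mul, hAT, dotProduct_comm]
      rw [hsym, hMw, dotProduct_smul, smul_eq_mul]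
      show -(lam ^ 2) / N * f s = -(1 / N * (lam ^ 2 * f s))
      ring
    have final := ode_exp_aux hf' t
    calc dotProduct (v t - ustar) w = f t := rfl
      _ = Real.exp (-(lam ^ 2) / N * t) * f 0 := final
      _ = Real.exp (-lam ^ 2 * t / N) * dotProduct (v 0 - ustar) w := by
          rw [show (-(lam ^ 2) / (N : ℝ)) * t = -lam ^ 2 * t / N from by ring]
  · -- Part 3: strict monotonicity of eigenvalues
    intro k k' hk1 hkk hk'
    have hpi := Real.pi_pos
    have hhpos : 0 < h := by rw [hh]; exact one_div_pos.mpr hNpos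
    have hc : (0 : ℝ) < 4 / h ^ 2 := div_pos (by norm_num) (pow_pos hhpos 2)
    set a : ℝ := k * π / (2 * N) with hadef
    set b : ℝ := k' * π / (2 * N) with hbdef
    have hab : a < b := by
      apply div_lt_div_of_pos_right ?_ (by positivity)
      exact mul_lt_mul_of_pos_right (by exact_mod_cast hkk) hpi
    have ha0 : 0 ≤ a := by positivity
    have hb2 : b < π / 2 := by
      have hk'N : (k' : ℝ) < N := by exact_mod_cast (by omega : k' < N)
      calc b = k' * π / (2 * N) := rfl
        _ < N * π / (2 * N) := by
            apply div_lt_div_of_pos_right ?_ (by positivity)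
            exact mul_lt_mul_of_pos_right hk'N hpi
        _ = π / 2 := by field_simp
    have hsin : Real.sin a < Real.sin b :=
      Real.strictMonoOn_sin ⟨by linarith, by linarith⟩ ⟨by linarith, le_of_lt hb2⟩ hab
    have hsa : 0 ≤ Real.sin a :=
      Real.sin_nonneg_of_nonneg_of_le_pi ha0 (by linarith)
    exact mul_lt_mul_of_pos_left (pow_lt_pow_left₀ hsin hsa (by norm_num)) hc
end
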